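/- Define the ℚ-linear map Li⁻_• from the free ℚ-vector space on finite sequences of nonnegative integers to ℚ[[z]] sending (s₁,…,s_r) to Li⁻_{(s₁,…,s_r)}. For a multi-index k = (k₁,…,k_r; k_∞), write the Magnus polynomial M^{(k)}x₁ in the monomial basis x₀^{a₁}x₁⋯x₀^{a_{r+1}}x₁ of ℚ⟨x₀,x₁⟩x₁ and let π(M^{(k)}x₁) be the corresponding ℚ-linear combination of words y_{a₁}⋯y_{a_{r+1}} (i.e. of multi-indices (a₁,…,a_{r+1})). Then Li⁻_{k₁}·Li⁻_{k₂}⋯Li⁻_{k_r}·Li⁻_{k_∞} = Li⁻_{π(M^{(k)}x₁)}. -/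

import Mathlib

open PowerSeries Finset

def liCoeff : List ℕ → ℕ → ℚ
  | [], n => if n = 0 then 1 else 0
  | s :: t, n => if n = 0 then 0 else (n : ℚ) ^ s * ∑ m ∈ Finset.range n, liCoeff t m

noncomputable def Li (s : List ℕ) : PowerSeries ℚ := PowerSeries.mk (liCoeff s)

def lieX : ℕ → FreeAlgebra ℚ (Fin 2)
  | 0 => FreeAlgebra.ι ℚ 1
  | m + 1 => FreeAlgebra.ι ℚ 0 * lieX m - lieX m * FreeAlgebra.ι ℚ 0

def magnus {r : ℕ} (k : Fin (r + 1) → ℕ) : FreeAlgebra ℚ (Fin 2) :=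
  ((List.finRange r).map fun j => lieX (k j.castSucc)).prod *
    FreeAlgebra.ι ℚ 0 ^ (k (Fin.last r))

def decode : List (Fin 2) → List ℕ
  | [] => []
  | a :: t =>
      if a = 1 then 0 :: decode t
      else
        match decode t with
        | [] => []
        | b :: rest => (b + 1) :: rest

noncomputable def LiPi (a : FreeAlgebra ℚ (Fin 2)) : PowerSeries ℚ :=
  (FreeAlgebra.equivMonoidAlgebraFreeMonoid a).coeff.sum
    fun w c => c • Li (decode (FreeMonoid.toList w))

namespace LiAux

noncomputable abbrev e : FreeAlgebra ℚ (Fin 2) ≃ₐ[ℚ] MonoidAlgebra ℚ (FreeMonoid (Fin 2)) :=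
  FreeAlgebra.equivMonoidAlgebraFreeMonoid

noncomputable def phi : MonoidAlgebra ℚ (FreeMonoid (Fin 2)) →ₗ[ℚ] PowerSeries ℚ :=
  (Finsupp.lsum ℚ fun w => LinearMap.toSpanSingleton ℚ _ (Li (decode (FreeMonoid.toList w)))).comp
    (MonoidAlgebra.coeffLinearEquiv ℚ).toLinearMap

lemma LiPi_eq (a : FreeAlgebra ℚ (Fin 2)) : LiPi a = phi (e a) := rfl

lemma phi_single (w : FreeMonoid (Fin 2)) (c : ℚ) :
    phi (MonoidAlgebra.single w c) = c • Li (decode (FreeMonoid.toList w)) := by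
  show (Finsupp.lsum ℚ (fun w => LinearMap.toSpanSingleton ℚ (PowerSeries ℚ)
    (Li (decode (FreeMonoid.toList w))))) (Finsupp.single w c) = _
  rw [Finsupp.lsum_single, LinearMap.toSpanSingleton_apply]

noncomputable def theta : PowerSeries ℚ →ₗ[ℚ] PowerSeries ℚ where
  toFun f := PowerSeries.mk fun n => n * PowerSeries.coeff n f
  map_add' f g := by ext n; simp [mul_add]
  map_smul' c f := by ext n; simp; ring

@[simp] lemma coeff_theta (f : PowerSeries ℚ) (n : ℕ) :
    PowerSeries.coeff n (theta f) = n * PowerSeries.coeff n f := by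
  simp [theta]

lemma theta_mul (f g : PowerSeries ℚ) :
    theta (f * g) = theta f * g + f * theta g := by
  ext n
  simp only [coeff_theta, map_add, PowerSeries.coeff_mul, Finset.mul_sum, ← Finset.sum_add_distrib]
  refine Finset.sum_congr rfl fun p hp => ?_
  rw [Finset.HasAntidiagonal.mem_antidiagonal] at hp
  rw [← hp]
  push_cast
  ring

lemma theta_Li (s : ℕ) (t : List ℕ) : theta (Li (s :: t)) = Li ((s + 1) :: t) := by
  ext n
  rcases eq_or_ne n 0 with rfl | hn
  · simp [Li, liCoeff]
  · simp [Li, liCoeff, hn, pow_succ]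
    ring

lemma coeff_Li_zero (m : ℕ) :
    PowerSeries.coeff m (Li [0]) = if m = 0 then 0 else 1 := by
  rcases eq_or_ne m 0 with rfl | hm
  · simp [Li, liCoeff]
  · simp only [Li, PowerSeries.coeff_mk, liCoeff, if_neg hm, pow_zero, one_mul]
    rw [Finset.sum_ite_eq' (Finset.range m) 0 (fun _ => (1 : ℚ))]
    simp [Nat.pos_of_ne_zero hm]

lemma Li_zero_mul (s : List ℕ) : Li [0] * Li s = Li ((0 : ℕ) :: s) := by
  rw [mul_comm]
  ext n
  rw [PowerSeries.coeff_mul, Finset.Nat.sum_antidiagonal_eq_sum_range_succ_mk]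
  rcases eq_or_ne n 0 with rfl | hn
  · simp [Li, liCoeff, coeff_Li_zero]
  · rw [Finset.sum_range_succ]
    rw [show n - n = 0 from Nat.sub_self n, coeff_Li_zero]
    simp only [if_pos rfl, mul_zero, add_zero]
    have h : ∀ i ∈ Finset.range n,
        PowerSeries.coeff i (Li s) * PowerSeries.coeff (n - i) (Li [0])
          = liCoeff s i := by
      intro i hi
      rw [Finset.mem_range] at hi
      rw [coeff_Li_zero, if_neg (by omega), mul_one]
      simp [Li]
    rw [Finset.sum_congr rfl h]
    simp [Li, liCoeff, hn]

noncomputable def X0 : MonoidAlgebra ℚ (FreeMonoid (Fin 2)) :=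
  MonoidAlgebra.single (FreeMonoid.of 0) 1
noncomputable def X1 : MonoidAlgebra ℚ (FreeMonoid (Fin 2)) :=
  MonoidAlgebra.single (FreeMonoid.of 1) 1

lemma e_iota (i : Fin 2) :
    e (FreeAlgebra.ι ℚ i) = MonoidAlgebra.single (FreeMonoid.of i) 1 := by
  simp [FreeAlgebra.equivMonoidAlgebraFreeMonoid]

lemma decode_one_cons (w : List (Fin 2)) : decode (1 :: w) = 0 :: decode w := by
  simp [decode]

lemma decode_zero_cons (w : List (Fin 2)) {b : ℕ} {rest : List ℕ}
    (h : decode w = b :: rest) : decode (0 :: w) = (b + 1) :: rest := by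
  simp [decode, h]

lemma decode_concat_ne (w : List (Fin 2)) : decode (w ++ [1]) ≠ [] := by
  induction w with
  | nil => simp [decode]
  | cons a t ih =>
    rcases eq_or_ne a 1 with rfl | h
    · simp [decode]
    · have h0 : a = 0 := by fin_cases a <;> simp_all
      subst h0
      obtain ⟨b, rest, hbr⟩ := List.exists_cons_of_ne_nil ih
      rw [show (0 : Fin 2) :: t ++ [1] = (0 : Fin 2) :: (t ++ [1]) from rfl,
        decode_zero_cons _ hbr]
      simp

lemma toList_mul (a b : FreeMonoid (Fin 2)) :
    FreeMonoid.toList (a * b) = FreeMonoid.toList a ++ FreeMonoid.toList b := rfl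

lemma phi_X1_mul (u : MonoidAlgebra ℚ (FreeMonoid (Fin 2))) :
    phi (X1 * u) = Li [0] * phi u := by
  induction u using MonoidAlgebra.induction_on with
  | of g =>
    rw [MonoidAlgebra.of_apply, X1, MonoidAlgebra.single_mul_single, phi_single, phi_single,
      one_mul]
    rw [show FreeMonoid.toList (FreeMonoid.of 1 * g) = 1 :: FreeMonoid.toList g from rfl]
    rw [decode_one_cons, ← Li_zero_mul, mul_smul_comm]
  | add f g hf hg => rw [mul_add, map_add, hf, hg, map_add, mul_add]
  | smul r f hf => rw [mul_smul_comm, map_smul, hf, map_smul, mul_smul_comm]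

lemma phi_X0_mul (v : MonoidAlgebra ℚ (FreeMonoid (Fin 2))) :
    phi (X0 * (v * X1)) = theta (phi (v * X1)) := by
  induction v using MonoidAlgebra.induction_on with
  | of g =>
    rw [MonoidAlgebra.of_apply, X0, X1, MonoidAlgebra.single_mul_single,
      MonoidAlgebra.single_mul_single, phi_single, phi_single, one_mul, mul_one]
    rw [show FreeMonoid.toList (FreeMonoid.of 0 * (g * FreeMonoid.of 1))
        = 0 :: (FreeMonoid.toList g ++ [1]) from rfl]
    rw [show FreeMonoid.toList (g * FreeMonoid.of 1)
        = FreeMonoid.toList g ++ [1] from rfl]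
    obtain ⟨b, rest, hbr⟩ := List.exists_cons_of_ne_nil (decode_concat_ne (FreeMonoid.toList g))
    rw [decode_zero_cons _ hbr, hbr, map_smul, theta_Li]
  | add f g hf hg =>
    rw [add_mul, mul_add, map_add, hf, hg, map_add, map_add]
  | smul r f hf =>
    rw [smul_mul_assoc, mul_smul_comm, map_smul, hf, map_smul, map_smul]

lemma key (kk : ℕ) (v : MonoidAlgebra ℚ (FreeMonoid (Fin 2))) :
    phi (e (lieX kk) * (v * X1)) = Li [kk] * phi (v * X1) := by
  induction kk generalizing v with
  | zero =>
    rw [show lieX 0 = FreeAlgebra.ι ℚ 1 from rfl, e_iota]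
    exact phi_X1_mul _
  | succ m ih =>
    have hA : e (lieX (m + 1)) = X0 * e (lieX m) - e (lieX m) * X0 := by
      rw [show lieX (m + 1) = FreeAlgebra.ι ℚ 0 * lieX m - lieX m * FreeAlgebra.ι ℚ 0 from rfl]
      rw [map_sub, map_mul, map_mul, e_iota]
      rfl
    rw [hA, sub_mul, map_sub]
    have h1 : (X0 * e (lieX m)) * (v * X1) = X0 * ((e (lieX m) * v) * X1) := by
      simp only [mul_assoc]
    have h2 : (e (lieX m) * X0) * (v * X1) = e (lieX m) * ((X0 * v) * X1) := by
      simp only [mul_assoc]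
    rw [h1, h2, phi_X0_mul, mul_assoc, ih, ih]
    rw [show (X0 * v) * X1 = X0 * (v * X1) from mul_assoc _ _ _, phi_X0_mul]
    rw [theta_mul, theta_Li]
    ring

lemma decode_replicate (m : ℕ) : decode (List.replicate m 0 ++ [1]) = [m] := by
  induction m with
  | zero => simp [decode]
  | succ n ih =>
    rw [show List.replicate (n + 1) (0 : Fin 2) ++ [1]
        = (0 : Fin 2) :: (List.replicate n 0 ++ [1]) from rfl, decode_zero_cons _ ih]

lemma toList_of_pow (m : ℕ) :
    FreeMonoid.toList ((FreeMonoid.of (0 : Fin 2)) ^ m) = List.replicate m 0 := by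
  induction m with
  | zero => rfl
  | succ n ih =>
    rw [pow_succ', toList_mul, ih]
    rfl

lemma phi_pow_X0 (m : ℕ) : phi (e (FreeAlgebra.ι ℚ 0 ^ m) * X1) = Li [m] := by
  rw [map_pow, e_iota, MonoidAlgebra.single_pow, X1, MonoidAlgebra.single_mul_single,
    one_pow, one_mul, phi_single, one_smul]
  rw [toList_mul, toList_of_pow]
  rw [show FreeMonoid.toList (FreeMonoid.of (1 : Fin 2)) = [1] from rfl]
  rw [decode_replicate]

lemma magnus_succ {r : ℕ} (k : Fin (r + 2) → ℕ) :
    magnus k = lieX (k 0) * magnus (k ∘ Fin.succ) := by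
  unfold magnus
  rw [List.finRange_succ, List.map_cons, List.prod_cons, List.map_map, mul_assoc]
  congr 2

end LiAux

open LiAux in
theorem Li_prod_eq_LiPi_magnus (r : ℕ) (k : Fin (r + 1) → ℕ) :
    (∏ j : Fin (r + 1), Li [k j]) = LiPi (magnus k * FreeAlgebra.ι ℚ 1) := by
  induction r with
  | zero =>
    rw [LiPi_eq, map_mul, e_iota]
    unfold magnus
    simp only [List.finRange_zero, List.map_nil, List.prod_nil, one_mul]
    rw [show (MonoidAlgebra.single (FreeMonoid.of (1 : Fin 2)) (1 : ℚ)) = X1 from rfl,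
      phi_pow_X0, Fin.prod_univ_one]
    rfl
  | succ n ih =>
    have hih := ih (k ∘ Fin.succ)
    simp only [Function.comp_apply] at hih
    rw [Fin.prod_univ_succ, hih]
    rw [LiPi_eq, LiPi_eq]
    rw [show e (magnus (k ∘ Fin.succ) * FreeAlgebra.ι ℚ 1)
        = e (magnus (k ∘ Fin.succ)) * X1 by rw [map_mul, e_iota]; rfl]
    rw [show e (magnus k * FreeAlgebra.ι ℚ 1)
        = (e (lieX (k 0)) * e (magnus (k ∘ Fin.succ))) * X1 by
      rw [magnus_succ, map_mul, map_mul, e_iota]; rfl]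
    rw [mul_assoc, key (k 0) (e (magnus (k ∘ Fin.succ)))]
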